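/- In the plactic monoid P_n, for u ∈ P_n with content c(u) and X = f_1^{x_1}⋯f_n^{x_n} where x_{i+1} ≥ c_i(u) for all i < n, the product satisfies Xu = f_1^{x_1+c_1(u)} f_2^{x_2−c_1(u)+c_2(u)} ⋯ f_n^{x_n−c_{n−1}(u)+c_n(u)}. -/

import Mathlib

/-- The Knuth relations on words over the alphabet `Fin n`:
`xzy = zxy` for `x ≤ y < z` and `yxz = yzx` for `x < y ≤ z`. -/
def KnuthRel (n : ℕ) : FreeMonoid (Fin n) → FreeMonoid (Fin n) → Prop := fun a b =>
  (∃ x y z : Fin n, x ≤ y ∧ y < z ∧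
      a = FreeMonoid.of x * FreeMonoid.of z * FreeMonoid.of y ∧
      b = FreeMonoid.of z * FreeMonoid.of x * FreeMonoid.of y) ∨
  (∃ x y z : Fin n, x < y ∧ y ≤ z ∧
      a = FreeMonoid.of y * FreeMonoid.of x * FreeMonoid.of z ∧
      b = FreeMonoid.of y * FreeMonoid.of z * FreeMonoid.of x)

/-- The plactic monoid of rank `n`, presented by generators `Fin n` and the
Knuth relations. -/
def Plactic (n : ℕ) := (conGen (KnuthRel n)).Quotient

instance (n : ℕ) : Monoid (Plactic n) :=
  inferInstanceAs (Monoid (conGen (KnuthRel n)).Quotient)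

/-- The canonical projection from the free monoid to the plactic monoid. -/
def Plactic.mk (n : ℕ) : FreeMonoid (Fin n) →* Plactic n := Con.mk' _

/-- The column word `f_i = n (n-1) ⋯ i`: the strictly decreasing word of all
letters from `n` down to `i`. -/
def colWord (n : ℕ) (i : Fin n) : FreeMonoid (Fin n) :=
  FreeMonoid.ofList (((List.finRange n).filter (fun j => i ≤ j)).reverse)

/-- The column element `f_i` of the plactic monoid. -/
def colElt (n : ℕ) (i : Fin n) : Plactic n := Plactic.mk n (colWord n i)

/-- The ordered product `f_1^{x_1} f_2^{x_2} ⋯ f_n^{x_n}` of powers of the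
column elements. -/
def colProd (n : ℕ) (x : Fin n → ℕ) : Plactic n :=
  ((List.finRange n).map (fun j => colElt n j ^ x j)).prod

namespace PlacticAux

variable {n : ℕ}

/-- generator as element of the plactic monoid, with ℕ index -/
def em (n : ℕ) (i : ℕ) (h : i < n) : Plactic n := Plactic.mk n (FreeMonoid.of ⟨i, h⟩)

/-- column element with ℕ index -/
def Fm (n : ℕ) (i : ℕ) (h : i < n) : Plactic n := colElt n ⟨i, h⟩

lemma mk_rel {a b : FreeMonoid (Fin n)} (h : KnuthRel n a b) :
    Plactic.mk n a = Plactic.mk n b :=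
  Con.eq _ |>.mpr (ConGen.Rel.of a b h)

/-- swap from relation 2, with left context: for x < y ≤ z, `c y z x = c y x z`. -/
lemma swap2 (c : Plactic n) {x y z : ℕ} (hx : x < n) (hy : y < n) (hz : z < n)
    (h1 : x < y) (h2 : y ≤ z) :
    c * em n y hy * em n z hz * em n x hx = c * em n y hy * em n x hx * em n z hz := by
  have base : em n y hy * em n z hz * em n x hx = em n y hy * em n x hx * em n z hz := by
    unfold em
    rw [← map_mul, ← map_mul, ← map_mul, ← map_mul]
    exact (mk_rel (Or.inr ⟨⟨x, hx⟩, ⟨y, hy⟩, ⟨z, hz⟩, h1, h2, rfl, rfl⟩)).symm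
  simp only [mul_assoc]
  rw [← mul_assoc (em n y hy) (em n z hz) (em n x hx), base]
  simp only [mul_assoc]

/-- the filter identity -/
lemma filter_key (i : Fin n) :
    (List.finRange n).filter (fun j => i ≤ j) = i :: (List.finRange n).filter (fun j => i < j) := by
  refine (fun hp h1 h2 => List.Perm.eq_of_pairwise' (r := (· ≤ · : Fin n → Fin n → Prop)) h1 h2 hp) ?_ ?_ ?_
  · rw [List.perm_ext_iff_of_nodup ((List.nodup_finRange n).filter _)]
    · intro a
      simp only [List.mem_filter, List.mem_finRange, decide_eq_true_eq, true_and,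
        List.mem_cons, Fin.le_def, Fin.lt_def, Fin.ext_iff]
      omega
    · refine List.Nodup.cons ?_ ((List.nodup_finRange n).filter _)
      simp
  · exact (List.pairwise_le_finRange n).filter _
  · rw [List.pairwise_cons]
    refine ⟨?_, (List.pairwise_le_finRange n).filter _⟩
    intro a ha
    simp only [List.mem_filter, decide_eq_true_eq] at ha
    exact ha.2.le

/-- decomposition of a column: `f_i = f_{i+1} · i` (non-top case). -/
lemma Fm_succ {i : ℕ} (hi : i < n) (hi1 : i + 1 < n) :
    Fm n i hi = Fm n (i+1) hi1 * em n i hi := by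
  have : colWord n ⟨i, hi⟩ = colWord n ⟨i+1, hi1⟩ * FreeMonoid.of ⟨i, hi⟩ := by
    unfold colWord
    rw [filter_key ⟨i, hi⟩, List.reverse_cons, FreeMonoid.ofList_append]
    rfl
  unfold Fm em colElt
  rw [this, map_mul]

/-- top column is a single letter. -/
lemma Fm_top {i : ℕ} (hi : i < n) (h : i + 1 = n) : Fm n i hi = em n i hi := by
  have h0 : ((List.finRange n).filter (fun j => (⟨i, hi⟩ : Fin n) < j)) = [] := by
    apply List.filter_eq_nil_iff.mpr
    intro a _
    simp only [decide_eq_true_eq, Fin.lt_def]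
    omega
  have : colWord n ⟨i, hi⟩ = FreeMonoid.of ⟨i, hi⟩ := by
    unfold colWord
    rw [filter_key ⟨i, hi⟩, h0]
    rfl
  unfold Fm em colElt
  rw [this]

/-- The key lemma Q: `c · f_{a+1} · f_j · a = c · f_{a+1} · a · f_j` for `a < j`. -/
lemma qlem : ∀ (k : ℕ) (a j : ℕ) (ha : a < j) (hj : j < n) (_ : n - 1 - j = k)
    (c : Plactic n),
    c * Fm n (a+1) (Nat.lt_of_le_of_lt ha hj) * Fm n j hj * em n a (ha.trans hj) =
    c * Fm n (a+1) (Nat.lt_of_le_of_lt ha hj) * em n a (ha.trans hj) * Fm n j hj := by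
  intro k
  induction k with
  | zero =>
    intro a j ha hj hk c
    have hjtop : j + 1 = n := by omega
    have ha1 : a + 1 < n := Nat.lt_of_le_of_lt ha hj
    rcases Nat.lt_or_ge (a + 1 + 1) n with ha2 | ha2
    · -- f_{a+1} = f_{a+2} (a+1)
      rw [Fm_top hj hjtop, Fm_succ ha1 ha2]
      simp only [← mul_assoc]
      exact swap2 _ _ _ _ (Nat.lt_succ_self a) ha
    · -- a+1 is top: f_{a+1} = (a+1)
      have : a + 1 + 1 = n := by omega
      rw [Fm_top hj hjtop, Fm_top ha1 this]
      exact swap2 _ _ _ _ (Nat.lt_succ_self a) ha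
  | succ k IH =>
    intro a j ha hj hk c
    have hj1 : j + 1 < n := by omega
    have ha1 : a + 1 < n := Nat.lt_of_le_of_lt ha hj
    have ha2 : a + 1 + 1 < n := by omega
    have hFj : Fm n j hj = Fm n (j+1) hj1 * em n j hj := Fm_succ hj hj1
    have hFa1 : Fm n (a+1) ha1 = Fm n (a+1+1) ha2 * em n (a+1) ha1 := Fm_succ ha1 ha2
    have IH1 := IH (a+1) (j+1) (by omega) hj1 (by omega)
    have IH2 := IH a (j+1) (by omega) hj1 (by omega)
    rw [hFj]
    simp only [← mul_assoc]
    rw [← IH2 c]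
    rw [hFa1]
    simp only [← mul_assoc]
    rw [← IH1 c]
    exact swap2 _ _ _ _ (Nat.lt_succ_self a) ha

lemma qlem0 (a j : ℕ) (ha : a < j) (hj : j < n) :
    Fm n (a+1) (Nat.lt_of_le_of_lt ha hj) * Fm n j hj * em n a (ha.trans hj) =
    Fm n (a+1) (Nat.lt_of_le_of_lt ha hj) * em n a (ha.trans hj) * Fm n j hj := by
  have h := qlem (n - 1 - j) a j ha hj rfl 1
  simpa only [one_mul] using h

lemma Fm_comm : ∀ (d i j : ℕ) (hij : i < j) (hj : j < n),
    j - i - 1 = d →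
    Fm n i (hij.trans hj) * Fm n j hj = Fm n j hj * Fm n i (hij.trans hj) := by
  intro d
  induction d with
  | zero =>
    intro i j hij hj hd
    obtain rfl : j = i + 1 := by omega
    rw [Fm_succ (hij.trans hj) hj]
    simp only [← mul_assoc]
    exact (qlem0 i (i+1) (by omega) hj).symm
  | succ d IHd =>
    intro i j hij hj hd
    have hi1 : i + 1 < j := by omega
    rw [Fm_succ (hij.trans hj) (Nat.lt_of_le_of_lt hij hj)]
    simp only [← mul_assoc]
    rw [← qlem0 i j hij hj]
    rw [IHd (i+1) j hi1 hj (by omega)]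

lemma colElt_commute (i j : Fin n) : Commute (colElt n i) (colElt n j) := by
  have he : ∀ (k : Fin n), Fm n (k : ℕ) k.isLt = colElt n k := by
    intro k; rfl
  rcases lt_trichotomy ((i : ℕ)) ((j : ℕ)) with h | h | h
  · have := Fm_comm ((j:ℕ) - i - 1) i j h j.isLt rfl
    rw [he i, he j] at this
    exact this
  · obtain rfl : i = j := Fin.ext h
    exact Commute.refl _
  · have := Fm_comm ((i:ℕ) - j - 1) j i h i.isLt rfl
    rw [he i, he j] at this
    exact this.symm

lemma prod_map_mul {M : Type*} [Monoid M] (l : List (Fin n)) (f g : Fin n → M)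
    (hc : ∀ i j, Commute (g i) (f j)) :
    (l.map fun j => f j * g j).prod = (l.map f).prod * (l.map g).prod := by
  induction l with
  | nil => simp
  | cons a l IH =>
    simp only [List.map_cons, List.prod_cons, IH]
    have hcom : Commute (g a) ((l.map f).prod) := by
      apply Commute.list_prod_right
      intro y hy
      obtain ⟨j, _, rfl⟩ := List.mem_map.mp hy
      exact hc a j
    simp only [mul_assoc]
    rw [← mul_assoc (g a), hcom.eq, mul_assoc]

lemma colProd_add (x y : Fin n → ℕ) :
    colProd n (fun j => x j + y j) = colProd n x * colProd n y := by
  unfold colProd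
  have h : ((List.finRange n).map (fun j => colElt n j ^ (x j + y j)))
      = (List.finRange n).map (fun j => colElt n j ^ x j * colElt n j ^ y j) := by
    apply List.map_congr_left
    intro j _
    rw [pow_add]
  rw [h, prod_map_mul _ _ _ (fun i j => ((colElt_commute i j).pow_pow _ _))]

lemma colProd_single (a : Fin n) :
    colProd n (fun j => if j = a then 1 else 0) = colElt n a := by
  unfold colProd
  rw [List.prod_map_eq_pow_single a _ (fun a' ha' _ => by simp [if_neg ha'])]
  simp [List.count_eq_one_of_mem (List.nodup_finRange n) (List.mem_finRange a)]

lemma colProd_mul_colElt (x : Fin n → ℕ) (a : Fin n) :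
    colProd n x * colElt n a = colProd n (fun j => x j + if j = a then 1 else 0) := by
  rw [colProd_add, colProd_single]

lemma colProd_mul_of (x : Fin n → ℕ) (i : Fin n)
    (hpos : ∀ h : (i:ℕ)+1 < n, 1 ≤ x ⟨(i:ℕ)+1, h⟩) :
    colProd n x * Plactic.mk n (FreeMonoid.of i) =
    colProd n (fun k => if k = i then x k + 1
      else if (k:ℕ) = (i:ℕ)+1 then x k - 1 else x k) := by
  rcases Nat.lt_or_ge ((i:ℕ)+1) n with h1 | h1
  · set i1 : Fin n := ⟨(i:ℕ)+1, h1⟩ with hi1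
    set x2 : Fin n → ℕ := fun k => if k = i1 then x k - 1 else x k with hx2
    have hii1 : i ≠ i1 := by
      intro h
      have := congrArg Fin.val h
      simp [hi1] at this
    have e1 : colProd n x = colProd n x2 * colElt n i1 := by
      rw [← colProd_single i1, ← colProd_add]
      congr 1
      funext k
      by_cases hk : k = i1
      · subst hk
        have hp := hpos h1
        rw [← hi1] at hp
        show x i1 = (if i1 = i1 then x i1 - 1 else x i1) + (if i1 = i1 then 1 else 0)
        rw [if_pos rfl, if_pos rfl]
        omega
      · simp [hx2, hk]
    have e2 : colElt n i1 * Plactic.mk n (FreeMonoid.of i) = colElt n i := by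
      have h := Fm_succ (n := n) (i := (i:ℕ)) i.isLt h1
      unfold Fm em at h
      simp only [Fin.eta] at h
      exact h.symm
    rw [e1, mul_assoc, e2, colProd_mul_colElt]
    congr 1
    funext k
    by_cases hk : k = i
    · subst hk
      rw [if_pos rfl, if_pos rfl, hx2]
      simp [hii1]
    · rw [if_neg hk, if_neg hk]
      by_cases hk2 : k = i1
      · subst hk2
        rw [if_pos rfl]
        simp [hx2, hi1]
      · have : (k:ℕ) ≠ (i:ℕ)+1 := by
          intro h
          exact hk2 (Fin.ext (by simp [hi1, h]))
        rw [if_neg this]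
        simp [hx2, hk2]
  · have htop : (i:ℕ) + 1 = n := by omega
    have e2 : colElt n i = Plactic.mk n (FreeMonoid.of i) := by
      have h := Fm_top (n := n) (i := (i:ℕ)) i.isLt htop
      unfold Fm em at h
      simp only [Fin.eta] at h
      exact h
    rw [← e2, colProd_mul_colElt]
    congr 1
    funext k
    by_cases hk : k = i
    · simp [hk]
    · have : (k:ℕ) ≠ (i:ℕ)+1 := by
        have := k.isLt; omega
      simp [hk, this]

lemma ccount (a b : Fin n) (l : List (Fin n)) :
    (b :: l).count a = l.count a + if a = b then 1 else 0 := by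
  simp only [List.count_cons, beq_iff_eq]
  by_cases h : a = b
  · rw [if_pos h, if_pos h.symm]
  · rw [if_neg h, if_neg (fun hh => h hh.symm)]

lemma main_aux : ∀ (l : List (Fin n)) (x : Fin n → ℕ)
    (_ : ∀ (i : Fin n) (h : (i : ℕ) + 1 < n), l.count i ≤ x ⟨(i : ℕ) + 1, h⟩),
    colProd n x * Plactic.mk n (FreeMonoid.ofList l) =
    colProd n (fun j =>
      if (j : ℕ) = 0 then x j + l.count j
      else x j + l.count j -
        l.count ⟨(j : ℕ) - 1, Nat.lt_of_le_of_lt (Nat.sub_le _ _) j.isLt⟩) := by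
  intro l
  induction l with
  | nil =>
    intro x _
    have h0 : (fun j : Fin n =>
        if (j : ℕ) = 0 then x j + ([] : List (Fin n)).count j
        else x j + ([] : List (Fin n)).count j -
          ([] : List (Fin n)).count ⟨(j : ℕ) - 1, Nat.lt_of_le_of_lt (Nat.sub_le _ _) j.isLt⟩)
        = x := by
      funext j
      by_cases h : (j : ℕ) = 0 <;> simp [h]
    rw [h0, show FreeMonoid.ofList ([] : List (Fin n)) = 1 from rfl, map_one, mul_one]
  | cons i l IH =>
    intro x hx
    have hpos : ∀ h : (i:ℕ)+1 < n, 1 ≤ x ⟨(i:ℕ)+1, h⟩ := by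
      intro h
      have h1 := hx i h
      have h2 : 1 ≤ (i :: l).count i := by simp [List.count_cons_self]
      omega
    have hofl : FreeMonoid.ofList (i :: l) = FreeMonoid.of i * FreeMonoid.ofList l := rfl
    set x1 : Fin n → ℕ := fun k => if k = i then x k + 1
      else if (k:ℕ) = (i:ℕ)+1 then x k - 1 else x k with hx1def
    have hx1 : ∀ (k : Fin n) (h : (k : ℕ) + 1 < n), l.count k ≤ x1 ⟨(k : ℕ) + 1, h⟩ := by
      intro k h
      have hck : l.count k ≤ (i :: l).count k := by
        rw [List.count_cons]; omega
      have h1 := hx k h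
      by_cases hki : (⟨(k:ℕ)+1, h⟩ : Fin n) = i
      · rw [hx1def]
        simp only [if_pos hki]
        omega
      · by_cases hki2 : ((k:ℕ)+1) = (i:ℕ)+1
        · have hk_eq : k = i := Fin.ext (by omega)
          have hcnt : (i :: l).count k = l.count k + 1 := by
            rw [hk_eq, List.count_cons_self]
          rw [hx1def]
          simp only [if_neg hki, if_pos hki2]
          omega
        · have hk_ne : k ≠ i := by
            intro hk; apply hki2; rw [hk]
          have hcnt : (i :: l).count k = l.count k := by
            rw [ccount k i l, if_neg hk_ne, add_zero]
          rw [hx1def]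
          simp only [if_neg hki, if_neg hki2]
          omega
    rw [hofl, map_mul, ← mul_assoc, colProd_mul_of x i hpos, ← hx1def, IH x1 hx1]
    congr 1
    funext j
    have hcj : (i :: l).count j = l.count j + if j = i then 1 else 0 := ccount j i l
    by_cases h0 : (j : ℕ) = 0
    · rw [if_pos h0, if_pos h0]
      by_cases hji : j = i
      · rw [hx1def]
        simp only [if_pos hji]
        rw [hcj, if_pos hji]
        omega
      · have : (j:ℕ) ≠ (i:ℕ)+1 := by
          have := i.isLt; omega
        rw [hx1def]
        simp only [if_neg hji, if_neg this]
        rw [hcj, if_neg hji]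
        omega
    · rw [if_neg h0, if_neg h0]
      have hj1lt : (j : ℕ) - 1 < n := Nat.lt_of_le_of_lt (Nat.sub_le _ _) j.isLt
      have hcj2 : (i :: l).count ⟨(j:ℕ)-1, hj1lt⟩
          = l.count ⟨(j:ℕ)-1, hj1lt⟩ + if (⟨(j:ℕ)-1, hj1lt⟩ : Fin n) = i then 1 else 0 :=
        ccount _ i l
      by_cases hji : j = i
      · have hne : ((⟨(j:ℕ)-1, hj1lt⟩ : Fin n) : ℕ) ≠ (i : ℕ) := by
          have : (j:ℕ) = (i:ℕ) := congrArg Fin.val hji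
          simp only []
          omega
        rw [hx1def]
        simp only [if_pos hji]
        rw [hcj, if_pos hji, hcj2, if_neg (fun hh => hne (congrArg Fin.val hh))]
        omega
      · by_cases hji2 : (j:ℕ) = (i:ℕ)+1
        · have heq : (⟨(j:ℕ)-1, hj1lt⟩ : Fin n) = i := Fin.ext (by simp; omega)
          have hxj : (i :: l).count ⟨(j:ℕ)-1, hj1lt⟩ ≤ x j := by
            have h2 := hx i (by rw [← hji2]; exact j.isLt)
            have : (⟨(i:ℕ)+1, by rw [← hji2]; exact j.isLt⟩ : Fin n) = j := Fin.ext (by simp; omega)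
            rw [this] at h2
            rw [heq]
            exact h2
          rw [hcj2, if_pos heq] at hxj ⊢
          rw [hx1def]
          simp only [if_neg hji, if_pos hji2]
          rw [hcj, if_neg hji]
          omega
        · have hne : (⟨(j:ℕ)-1, hj1lt⟩ : Fin n) ≠ i := by
            intro hh
            have := congrArg Fin.val hh
            simp at this
            omega
          rw [hx1def]
          simp only [if_neg hji, if_neg hji2]
          rw [hcj, if_neg hji, hcj2, if_neg hne]
          omega

end PlacticAux

/-- For `u ∈ P_n` and `X = f_1^{x_1} ⋯ f_n^{x_n}` with `x_{i+1} ≥ c_i(u)` for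
all `i < n`, we have
`Xu = f_1^{x_1+c_1(u)} f_2^{x_2−c_1(u)+c_2(u)} ⋯ f_n^{x_n−c_{n−1}(u)+c_n(u)}`. -/
theorem plactic_colProd_mul_formula (n : ℕ) (u : FreeMonoid (Fin n)) (x : Fin n → ℕ)
    (hx : ∀ (i : Fin n) (h : (i : ℕ) + 1 < n),
      (FreeMonoid.toList u).count i ≤ x ⟨(i : ℕ) + 1, h⟩) :
    colProd n x * Plactic.mk n u =
      colProd n (fun j =>
        if (j : ℕ) = 0 then x j + (FreeMonoid.toList u).count j
        else x j + (FreeMonoid.toList u).count j -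
          (FreeMonoid.toList u).count
            ⟨(j : ℕ) - 1, Nat.lt_of_le_of_lt (Nat.sub_le _ _) j.isLt⟩) := by
  have h := PlacticAux.main_aux (FreeMonoid.toList u) x hx
  rwa [FreeMonoid.ofList_toList] at h
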